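/- Let D be a weakly connected and finitely separable digraph and let v, w be distinct vertices with v ∼ w. If W is a finite inclusion-minimal witness for v ∼ w, then the subdigraph of D induced by the edge set W (whose vertices are the vertices incident with edges of W) is strongly connected. -/

import Mathlib

/-- A digraph with vertex type `V` and edge type `E`, allowing parallel edges. -/
structure MultiDigraph (V : Type*) (E : Type*) where
  tail : E → V
  head : E → V

namespace MultiDigraph

variable {V : Type*} {E : Type*} (D : MultiDigraph V E)

/-- Adjacency in the underlying undirected multigraph. -/
def Adj (u v : V) : Prop :=
  ∃ e : E, (D.tail e = u ∧ D.head e = v) ∨ (D.tail e = v ∧ D.head e = u)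

/-- The underlying undirected multigraph is connected. -/
def WeaklyConnected : Prop :=
  ∀ u v : V, Relation.ReflTransGen D.Adj u v

/-- `B` is the dicut of `D` whose in-shore is `X` (every edge of the cut has its
head in `X`, and no edge leaves `X`). -/
def DicutWith (X : Set V) (B : Set E) : Prop :=
  (∀ e : E, D.tail e ∈ X → D.head e ∈ X) ∧
    B = {e : E | D.tail e ∉ X ∧ D.head e ∈ X}

/-- `B` is a dicut of `D`. -/
def IsDicut (B : Set E) : Prop :=
  ∃ X : Set V, D.DicutWith X B

/-- A dibond is a minimal non-empty dicut. -/
def IsDibond (B : Set E) : Prop :=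
  D.IsDicut B ∧ B.Nonempty ∧
    ∀ B' : Set E, D.IsDicut B' → B'.Nonempty → B' ⊆ B → B' = B

/-- A dijoin meets every non-empty dicut. -/
def Dijoin (F : Set E) : Prop :=
  ∀ B : Set E, D.IsDicut B → B.Nonempty → (F ∩ B).Nonempty

/-- A finitary dijoin meets every non-empty finite dicut. -/
def FinitaryDijoin (F : Set E) : Prop :=
  ∀ B : Set E, D.IsDicut B → B.Finite → B.Nonempty → (F ∩ B).Nonempty

/-- Two dicuts are nested if they have witnessing sides one of which is
`⊆`-comparable with a side of the other. -/
def NestedDicuts (B₁ B₂ : Set E) : Prop :=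
  ∃ X₁ X₂ : Set V, D.DicutWith X₁ B₁ ∧ D.DicutWith X₂ B₂ ∧
    (X₁ ⊆ X₂ ∨ X₂ ⊆ X₁ ∨ X₁ ⊆ X₂ᶜ ∨ X₂ᶜ ⊆ X₁)

/-- An optimal pair: a set `ℬ` of pairwise disjoint finite dicuts and a finitary
dijoin `F ⊆ ⋃ ℬ` meeting each member of `ℬ` in exactly one edge. -/
def OptimalPair (F : Set E) (ℬ : Set (Set E)) : Prop :=
  (∀ B ∈ ℬ, D.IsDicut B ∧ B.Finite) ∧
    ℬ.Pairwise Disjoint ∧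
    D.FinitaryDijoin F ∧
    F ⊆ ⋃₀ ℬ ∧
    ∀ B ∈ ℬ, (F ∩ B).ncard = 1

/-- A nested optimal pair. -/
def NestedOptimalPair (F : Set E) (ℬ : Set (Set E)) : Prop :=
  D.OptimalPair F ℬ ∧ ℬ.Pairwise D.NestedDicuts

/-- The underlying multigraph contains no ray. -/
def Rayless : Prop :=
  ¬ ∃ f : ℕ → V, Function.Injective f ∧ ∀ n : ℕ, D.Adj (f n) (f (n + 1))

/-- The (undirected) cut of `D` with side `X`: all edges with exactly one
endpoint in `X`. -/
def cutEdges (X : Set V) : Set E :=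
  {e : E | (D.tail e ∈ X ∧ D.head e ∉ X) ∨ (D.tail e ∉ X ∧ D.head e ∈ X)}

/-- Any two distinct vertices are separated by a finite cut. -/
def FinitelySeparable : Prop :=
  ∀ v w : V, v ≠ w → ∃ X : Set V, (D.cutEdges X).Finite ∧ v ∈ X ∧ w ∉ X

/-- Any two distinct vertices lie on different sides of some finite dicut. -/
def FinitelyDiseparable : Prop :=
  ∀ v w : V, v ≠ w → ∃ (X : Set V) (B : Set E), D.DicutWith X B ∧ B.Finite ∧
    ((v ∈ X ∧ w ∉ X) ∨ (v ∉ X ∧ w ∈ X))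

/-- The underlying multigraph is 2-connected: it is connected and deleting any
single vertex keeps it connected. -/
def UnderlyingTwoConnected : Prop :=
  D.WeaklyConnected ∧ ∀ x u v : V, u ≠ x → v ≠ x →
    Relation.ReflTransGen (fun a b => a ≠ x ∧ b ≠ x ∧ D.Adj a b) u v

/-- `v ∼ w`: no finite dicut of `D` separates `v` and `w`. -/
def Sim (v w : V) : Prop :=
  ∀ (X : Set V) (B : Set E), D.DicutWith X B → B.Finite → (v ∈ X ↔ w ∈ X)

/-- `W` is a witness for `v ∼ w`: it meets every finite cut separating `v`
and `w` in both directions. -/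
def Witness (v w : V) (W : Set E) : Prop :=
  ∀ X : Set V, (D.cutEdges X).Finite → v ∈ X → w ∉ X →
    (∃ e ∈ W, D.tail e ∈ X ∧ D.head e ∉ X) ∧
    (∃ e ∈ W, D.tail e ∉ X ∧ D.head e ∈ X)

end MultiDigraph

section Aux

variable {V : Type*} {E : Type*}

lemma cutEdges_compl (D : MultiDigraph V E) (X : Set V) :
    D.cutEdges Xᶜ = D.cutEdges X := by
  ext e; simp [MultiDigraph.cutEdges]; tauto

lemma cutEdges_inter (D : MultiDigraph V E) (X Y : Set V) :
    D.cutEdges (X ∩ Y) ⊆ D.cutEdges X ∪ D.cutEdges Y := by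
  intro e; simp [MultiDigraph.cutEdges]; tauto

lemma cutEdges_union (D : MultiDigraph V E) (X Y : Set V) :
    D.cutEdges (X ∪ Y) ⊆ D.cutEdges X ∪ D.cutEdges Y := by
  intro e; simp [MultiDigraph.cutEdges]; tauto

lemma cutEdges_empty (D : MultiDigraph V E) : D.cutEdges (∅ : Set V) = ∅ := by
  ext e; simp [MultiDigraph.cutEdges]

lemma cutEdges_univ (D : MultiDigraph V E) : D.cutEdges (Set.univ : Set V) = ∅ := by
  ext e; simp [MultiDigraph.cutEdges]

lemma exists_cut_single (D : MultiDigraph V E) (hsep : D.FinitelySeparable)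
    (T : Set V) (hT : T.Finite) (a : V) :
    ∃ X : Set V, (D.cutEdges X).Finite ∧ a ∈ X ∧ ∀ b ∈ T, b ≠ a → b ∉ X := by
  classical
  refine Set.Finite.induction_on (motive := fun T _ => ∃ X : Set V, (D.cutEdges X).Finite ∧ a ∈ X ∧ ∀ b ∈ T, b ≠ a → b ∉ X) T hT
    ⟨Set.univ, by rw [cutEdges_univ]; exact Set.finite_empty, trivial, by simp⟩ ?_
  intro c T' _ _ ih
  obtain ⟨X, hXf, haX, hX⟩ := ih
  by_cases hca : c = a
  · refine ⟨X, hXf, haX, ?_⟩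
    rintro b (rfl | hb) hba
    · exact absurd hca hba
    · exact hX b hb hba
  · obtain ⟨Y, hYf, haY, hcY⟩ := hsep a c (fun h => hca h.symm)
    refine ⟨X ∩ Y, (hXf.union hYf).subset (cutEdges_inter D X Y), ⟨haX, haY⟩, ?_⟩
    rintro b (rfl | hb) hba hbXY
    · exact hcY hbXY.2
    · exact hX b hb hba hbXY.1

lemma exists_cut_trace (D : MultiDigraph V E) (hsep : D.FinitelySeparable)
    (T : Set V) (hT : T.Finite) (T₀ : Set V) (hT₀ : T₀ ⊆ T) :
    ∃ X : Set V, (D.cutEdges X).Finite ∧ X ∩ T = T₀ := by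
  classical
  have key : ∀ T₀ : Set V, T₀.Finite → T₀ ⊆ T →
      ∃ X : Set V, (D.cutEdges X).Finite ∧ X ∩ T = T₀ := by
    intro T₀ h
    refine Set.Finite.induction_on (motive := fun T₀ _ => T₀ ⊆ T → ∃ X : Set V, (D.cutEdges X).Finite ∧ X ∩ T = T₀) T₀ h ?_ ?_
    · intro _
      exact ⟨∅, by rw [cutEdges_empty]; exact Set.finite_empty, by simp⟩
    · intro a T₁ ha hfin ih hsub
      obtain ⟨X, hXf, hXT⟩ := ih (fun x hx => hsub (Set.mem_insert_of_mem a hx))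
      obtain ⟨Y, hYf, haY, hY⟩ := exists_cut_single D hsep T hT a
      have haT : a ∈ T := hsub (Set.mem_insert a T₁)
      have hYT : Y ∩ T = {a} := by
        ext b
        constructor
        · rintro ⟨hbY, hbT⟩
          by_contra hb
          exact hY b hbT (fun h => hb h) hbY
        · rintro rfl
          exact ⟨haY, haT⟩
      refine ⟨X ∪ Y, (hXf.union hYf).subset (cutEdges_union D X Y), ?_⟩
      rw [Set.union_inter_distrib_right, hXT, hYT, Set.union_singleton]
  exact key T₀ (hT.subset hT₀) hT₀

end Aux

/-- Let `D` be a weakly connected, finitely separable digraph and let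
`v ≠ w` with `v ∼ w`. If `W` is a finite inclusion-minimal witness for
`v ∼ w`, then the subdigraph induced by the edge set `W` is strongly
connected: any two vertices incident with an edge of `W` are joined by a
directed path using only edges of `W`. -/
theorem minimal_witness_strongly_connected {V E : Type*}
    (D : MultiDigraph V E) (hD : D.WeaklyConnected)
    (hsep : D.FinitelySeparable)
    (v w : V) (hne : v ≠ w) (hvw : D.Sim v w) (W : Set E)
    (hfin : W.Finite) (hW : D.Witness v w W)
    (hmin : ∀ W' : Set E, W' ⊆ W → D.Witness v w W' → W' = W) :
    ∀ u y : V, (∃ e ∈ W, D.tail e = u ∨ D.head e = u) →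
      (∃ e ∈ W, D.tail e = y ∨ D.head e = y) →
      Relation.ReflTransGen
        (fun a b => ∃ e ∈ W, D.tail e = a ∧ D.head e = b) u y := by
  classical
  intro u y hu hy
  by_contra hny
  -- A : vertices reachable from u along W-edges
  set A : Set V :=
    {a | Relation.ReflTransGen
        (fun a b => ∃ e ∈ W, D.tail e = a ∧ D.head e = b) u a} with hAdef
  have huA : u ∈ A := Relation.ReflTransGen.refl
  have hyA : y ∉ A := hny
  have hclose : ∀ e ∈ W, D.tail e ∈ A → D.head e ∈ A := by
    intro e he ht
    exact Relation.ReflTransGen.tail ht ⟨e, he, rfl, rfl⟩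
  have hclose' : ∀ e ∈ W, D.head e ∉ A → D.tail e ∉ A :=
    fun e he hh ht => hh (hclose e he ht)
  -- S : vertices incident with W
  set S : Set V := {x | ∃ e ∈ W, D.tail e = x ∨ D.head e = x} with hSdef
  have hSfin : S.Finite := by
    have hsub : S ⊆ (D.tail '' W) ∪ (D.head '' W) := by
      rintro x ⟨e, he, (rfl | rfl)⟩
      · exact Or.inl ⟨e, he, rfl⟩
      · exact Or.inr ⟨e, he, rfl⟩
    exact ((hfin.image D.tail).union (hfin.image D.head)).subset hsub
  have htS : ∀ e ∈ W, D.tail e ∈ S := fun e he => ⟨e, he, Or.inl rfl⟩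
  have hhS : ∀ e ∈ W, D.head e ∈ S := fun e he => ⟨e, he, Or.inr rfl⟩
  have huS : u ∈ S := hu
  have hyS : y ∈ S := hy
  set T : Set V := S ∪ {v, w} with hTdef
  have hTfin : T.Finite := hSfin.union ((Set.finite_singleton w).insert v)
  have hvT : v ∈ T := Or.inr (Set.mem_insert v {w})
  have hwT : w ∈ T := Or.inr (Set.mem_insert_of_mem v rfl)
  have hST : S ⊆ T := Set.subset_union_left
  -- Case B : v is (effectively) inside A, w outside
  have caseB : (v ∈ S → v ∈ A) → (w ∈ S → w ∉ A) → False := by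
    intro hv hw
    obtain ⟨X, hXF, hXT⟩ :=
      exists_cut_trace D hsep T hTfin (((A ∩ S) ∪ {v}) \ {w})
        (by
          rintro x ⟨(⟨-, hxS⟩ | rfl), -⟩
          · exact hST hxS
          · exact hvT)
    have hvX : v ∈ X := by
      have : v ∈ X ∩ T := by
        rw [hXT]; exact ⟨Or.inr rfl, fun h => hne h⟩
      exact this.1
    have hwX : w ∉ X := by
      intro hw'
      have : w ∈ X ∩ T := ⟨hw', hwT⟩
      rw [hXT] at this
      exact this.2 rfl
    obtain ⟨⟨e, heW, hte, hhe⟩, -⟩ := hW X hXF hvX hwX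
    have htT : D.tail e ∈ X ∩ T := ⟨hte, hST (htS e heW)⟩
    rw [hXT] at htT
    have htA : D.tail e ∈ A := by
      rcases htT.1 with h | h
      · exact h.1
      · have hvS : v ∈ S := by rw [← h]; exact htS e heW
        rw [h]; exact hv hvS
    have hhA := hclose e heW htA
    apply hhe
    have hhw : D.head e ≠ w := by
      intro h
      exact hw (by rw [← h]; exact hhS e heW) (by rw [← h]; exact hhA)
    have : D.head e ∈ ((A ∩ S) ∪ {v}) \ {w} :=
      ⟨Or.inl ⟨hhA, hhS e heW⟩, hhw⟩
    rw [← hXT] at this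
    exact this.1
  -- Case B' : v is (effectively) outside A, w inside
  have caseB' : (v ∈ S → v ∉ A) → (w ∈ S → w ∈ A) → False := by
    intro hv hw
    obtain ⟨X, hXF, hXT⟩ :=
      exists_cut_trace D hsep T hTfin (((S \ A) ∪ {v}) \ {w})
        (by
          rintro x ⟨(⟨hxS, -⟩ | rfl), -⟩
          · exact hST hxS
          · exact hvT)
    have hvX : v ∈ X := by
      have : v ∈ X ∩ T := by
        rw [hXT]; exact ⟨Or.inr rfl, fun h => hne h⟩
      exact this.1
    have hwX : w ∉ X := by
      intro hw'
      have : w ∈ X ∩ T := ⟨hw', hwT⟩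
      rw [hXT] at this
      exact this.2 rfl
    obtain ⟨-, ⟨e, heW, hte, hhe⟩⟩ := hW X hXF hvX hwX
    have hhT : D.head e ∈ X ∩ T := ⟨hhe, hST (hhS e heW)⟩
    rw [hXT] at hhT
    have hhA : D.head e ∉ A := by
      rcases hhT.1 with h | h
      · exact h.2
      · have hvS : v ∈ S := by rw [← h]; exact hhS e heW
        rw [h]; exact hv hvS
    have htA : D.tail e ∉ A := hclose' e heW hhA
    apply hte
    have htw : D.tail e ≠ w := by
      intro h
      exact htA (by rw [h]; exact hw (by rw [← h]; exact htS e heW))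
    have : D.tail e ∈ ((S \ A) ∪ {v}) \ {w} :=
      ⟨Or.inl ⟨htS e heW, htA⟩, htw⟩
    rw [← hXT] at this
    exact this.1
  -- Case I : v, w ∈ S \ A ; the edges with head outside A form a smaller witness
  have caseI : v ∈ S → v ∉ A → w ∈ S → w ∉ A → False := by
    intro hvS hvA hwS hwA
    obtain ⟨B, hBF, hBT⟩ :=
      exists_cut_trace D hsep T hTfin (A ∩ S) (fun x hx => hST hx.2)
    have hBA : ∀ x ∈ S, (x ∈ B ↔ x ∈ A) := by
      intro x hxS
      constructor
      · intro hxB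
        have : x ∈ B ∩ T := ⟨hxB, hST hxS⟩
        rw [hBT] at this; exact this.1
      · intro hxA
        have : x ∈ B ∩ T := by rw [hBT]; exact ⟨hxA, hxS⟩
        exact this.1
    set W' : Set E := {e | e ∈ W ∧ D.head e ∉ A} with hW'def
    have hW'sub : W' ⊆ W := fun e he => he.1
    have hW'wit : D.Witness v w W' := by
      intro X hXF hvX hwX
      constructor
      · -- forward: use the cut X ∪ B
        have hfinXB : (D.cutEdges (X ∪ B)).Finite :=
          (hXF.union hBF).subset (cutEdges_union D X B)
        have hvXB : v ∈ X ∪ B := Or.inl hvX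
        have hwXB : w ∉ X ∪ B := by
          rintro (h | h)
          · exact hwX h
          · exact hwA ((hBA w hwS).1 h)
        obtain ⟨⟨e, heW, hte, hhe⟩, -⟩ := hW (X ∪ B) hfinXB hvXB hwXB
        have hhB : D.head e ∉ B := fun h => hhe (Or.inr h)
        have hhA : D.head e ∉ A := fun h => hhB ((hBA _ (hhS e heW)).2 h)
        have htA : D.tail e ∉ A := hclose' e heW hhA
        have htB : D.tail e ∉ B := fun h => htA ((hBA _ (htS e heW)).1 h)
        have htX : D.tail e ∈ X := by
          rcases hte with h | h
          · exact h
          · exact absurd h htB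
        exact ⟨e, ⟨heW, hhA⟩, htX, fun h => hhe (Or.inl h)⟩
      · -- backward: use the cut X ∩ Bᶜ
        have hBcF : (D.cutEdges Bᶜ).Finite := by
          rw [cutEdges_compl]; exact hBF
        have hfinXB : (D.cutEdges (X ∩ Bᶜ)).Finite :=
          (hXF.union hBcF).subset (cutEdges_inter D X Bᶜ)
        have hvXB : v ∈ X ∩ Bᶜ :=
          ⟨hvX, fun h => hvA ((hBA v hvS).1 h)⟩
        have hwXB : w ∉ X ∩ Bᶜ := fun h => hwX h.1
        obtain ⟨-, ⟨e, heW, hte, hhe⟩⟩ := hW (X ∩ Bᶜ) hfinXB hvXB hwXB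
        have hhA : D.head e ∉ A := fun h => hhe.2 ((hBA _ (hhS e heW)).2 h)
        have htA : D.tail e ∉ A := hclose' e heW hhA
        have htB : D.tail e ∉ B := fun h => htA ((hBA _ (htS e heW)).1 h)
        have htX : D.tail e ∉ X := fun h => hte ⟨h, htB⟩
        exact ⟨e, ⟨heW, hhA⟩, htX, hhe.1⟩
    have := hmin W' hW'sub hW'wit
    obtain ⟨e₀, he₀W, he₀⟩ := hu
    have he₀W' : e₀ ∈ W' := by rw [this]; exact he₀W
    rcases he₀ with h | h
    · exact he₀W'.2 (hclose e₀ he₀W (by rw [h]; exact huA))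
    · exact he₀W'.2 (by rw [h]; exact huA)
  -- Case II : v, w ∈ S ∩ A ; the edges with tail inside A form a smaller witness
  have caseII : v ∈ S → v ∈ A → w ∈ S → w ∈ A → False := by
    intro hvS hvA hwS hwA
    obtain ⟨C, hCF, hCT⟩ :=
      exists_cut_trace D hsep T hTfin (A ∩ S) (fun x hx => hST hx.2)
    have hCA : ∀ x ∈ S, (x ∈ C ↔ x ∈ A) := by
      intro x hxS
      constructor
      · intro hxB
        have : x ∈ C ∩ T := ⟨hxB, hST hxS⟩
        rw [hCT] at this; exact this.1
      · intro hxA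
        have : x ∈ C ∩ T := by rw [hCT]; exact ⟨hxA, hxS⟩
        exact this.1
    obtain ⟨C₂, hC₂F, hC₂T⟩ :=
      exists_cut_trace D hsep T hTfin (S \ A) (fun x hx => hST hx.1)
    have hC₂A : ∀ x ∈ S, (x ∈ C₂ ↔ x ∉ A) := by
      intro x hxS
      constructor
      · intro hxB
        have : x ∈ C₂ ∩ T := ⟨hxB, hST hxS⟩
        rw [hC₂T] at this; exact this.2
      · intro hxA
        have : x ∈ C₂ ∩ T := by rw [hC₂T]; exact ⟨hxS, hxA⟩
        exact this.1
    set W₁ : Set E := {e | e ∈ W ∧ D.tail e ∈ A} with hW₁def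
    have hW₁sub : W₁ ⊆ W := fun e he => he.1
    have hW₁wit : D.Witness v w W₁ := by
      intro X hXF hvX hwX
      constructor
      · -- forward: use the cut X ∩ C
        have hfinXC : (D.cutEdges (X ∩ C)).Finite :=
          (hXF.union hCF).subset (cutEdges_inter D X C)
        have hvXC : v ∈ X ∩ C := ⟨hvX, (hCA v hvS).2 hvA⟩
        have hwXC : w ∉ X ∩ C := fun h => hwX h.1
        obtain ⟨⟨e, heW, hte, hhe⟩, -⟩ := hW (X ∩ C) hfinXC hvXC hwXC
        have htA : D.tail e ∈ A := (hCA _ (htS e heW)).1 hte.2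
        have hhA : D.head e ∈ A := hclose e heW htA
        have hhC : D.head e ∈ C := (hCA _ (hhS e heW)).2 hhA
        have hhX : D.head e ∉ X := fun h => hhe ⟨h, hhC⟩
        exact ⟨e, ⟨heW, htA⟩, hte.1, hhX⟩
      · -- backward: use the cut X ∪ C₂
        have hfinXC : (D.cutEdges (X ∪ C₂)).Finite :=
          (hXF.union hC₂F).subset (cutEdges_union D X C₂)
        have hvXC : v ∈ X ∪ C₂ := Or.inl hvX
        have hwXC : w ∉ X ∪ C₂ := by
          rintro (h | h)
          · exact hwX h
          · exact (hC₂A w hwS).1 h hwA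
        obtain ⟨-, ⟨e, heW, hte, hhe⟩⟩ := hW (X ∪ C₂) hfinXC hvXC hwXC
        have htC₂ : D.tail e ∉ C₂ := fun h => hte (Or.inr h)
        have htA : D.tail e ∈ A := by
          by_contra h
          exact htC₂ ((hC₂A _ (htS e heW)).2 h)
        have hhA : D.head e ∈ A := hclose e heW htA
        have hhX : D.head e ∈ X := by
          rcases hhe with h | h
          · exact h
          · exact absurd hhA ((hC₂A _ (hhS e heW)).1 h)
        exact ⟨e, ⟨heW, htA⟩, fun h => hte (Or.inl h), hhX⟩
    have := hmin W₁ hW₁sub hW₁wit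
    obtain ⟨e₁, he₁W, he₁⟩ := hy
    have he₁W₁ : e₁ ∈ W₁ := by rw [this]; exact he₁W
    rcases he₁ with h | h
    · exact hyA (by rw [← h]; exact he₁W₁.2)
    · exact hyA (by rw [← h]; exact hclose e₁ he₁W he₁W₁.2)
  -- dispatch the four cases
  by_cases hvS : v ∈ S
  · by_cases hvA : v ∈ A
    · by_cases hwS : w ∈ S
      · by_cases hwA : w ∈ A
        · exact caseII hvS hvA hwS hwA
        · exact caseB (fun _ => hvA) (fun _ => hwA)
      · exact caseB (fun _ => hvA) (fun h => absurd h hwS)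
    · by_cases hwS : w ∈ S
      · by_cases hwA : w ∈ A
        · exact caseB' (fun _ => hvA) (fun _ => hwA)
        · exact caseI hvS hvA hwS hwA
      · exact caseB' (fun _ => hvA) (fun h => absurd h hwS)
  · by_cases hwS : w ∈ S
    · by_cases hwA : w ∈ A
      · exact caseB' (fun h => absurd h hvS) (fun _ => hwA)
      · exact caseB (fun h => absurd h hvS) (fun _ => hwA)
    · exact caseB (fun h => absurd h hvS) (fun h => absurd h hwS)
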